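/- Let G and H be locally compact Hausdorff groups with left Haar measures α and β and modular functions δ_G and δ_H, and let φ : H → G be a continuous group homomorphism. Then for every continuous compactly supported function f : H × G → ℂ, ∫_G ∫_H f(η⁻¹, γ) dβ(η) dα⁻¹(γ) = ∫_G ∫_H f(η, φ(η)⁻¹γ) · (δ_G(φ(η)) / δ_H(η)) dβ(η) dα⁻¹(γ). (This expresses that the right Haar measure α⁻¹ on G is quasi-invariant for the action η·γ = φ(η)γ of H on G, with adjoining function Δ(η, x) = δ_G(φ(η))/δ_H(η).) -/

import Mathlib

open MeasureTheory

lemma integral_map_inv' {G : Type*} [Group G] [TopologicalSpace G] [IsTopologicalGroup G]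
    [MeasurableSpace G] [BorelSpace G] {E : Type*} [NormedAddCommGroup E] [NormedSpace ℝ E]
    (μ : Measure G) (F : G → E) :
    ∫ x, F x ∂(Measure.map (fun x : G => x⁻¹) μ) = ∫ x, F x⁻¹ ∂μ := by
  have h : (fun x : G => x⁻¹) = (MeasurableEquiv.inv G) := rfl
  rw [h, MeasureTheory.integral_map_equiv]
  rfl

lemma cintegral_ofReal {X : Type*} [MeasurableSpace X] (μ : Measure X) (f : X → ℝ) :
    ∫ x, ((f x : ℝ) : ℂ) ∂μ = ((∫ x, f x ∂μ : ℝ) : ℂ) := integral_ofReal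

lemma delta_props {G : Type*} [Group G] [TopologicalSpace G] [IsTopologicalGroup G]
    [LocallyCompactSpace G] [T2Space G] [MeasurableSpace G] [BorelSpace G]
    (α : Measure G) [α.IsHaarMeasure]
    (δ : G → ℝ) (hpos : ∀ γ, 0 < δ γ)
    (hδ : ∀ f : G → ℂ, Continuous f → HasCompactSupport f → ∀ c : G,
      ∫ γ, f (γ * c) ∂α = ((δ c : ℂ))⁻¹ * ∫ γ, f γ ∂α) :
    Continuous δ ∧ (∀ c : G, δ c⁻¹ = (δ c)⁻¹) ∧
      (∀ h : G → ℂ, Continuous h → HasCompactSupport h →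
        ∫ γ, h γ⁻¹ ∂α = ∫ γ, h γ * ((δ γ : ℝ) : ℂ)⁻¹ ∂α) := by
  -- real version of the hypothesis
  have hδR : ∀ f : G → ℝ, Continuous f → HasCompactSupport f → ∀ c : G,
      ∫ γ, f (γ * c) ∂α = (δ c)⁻¹ * ∫ γ, f γ ∂α := by
    intro f hf h'f c
    have := hδ (fun γ => (f γ : ℂ)) (Complex.continuous_ofReal.comp hf)
      (h'f.comp_left Complex.ofReal_zero) c
    rw [cintegral_ofReal, cintegral_ofReal, ← Complex.ofReal_inv, ← Complex.ofReal_mul] at this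
    exact_mod_cast this
  -- reference bump function
  obtain ⟨⟨g, g_cont⟩, g_comp, g_nonneg, g_one⟩ :
      ∃ (g : C(G, ℝ)), HasCompactSupport g ∧ 0 ≤ g ∧ g 1 ≠ 0 := exists_continuous_nonneg_pos 1
  have int_g_pos : 0 < ∫ x, g x ∂α :=
    g_cont.integral_pos_of_hasCompactSupport_nonneg_nonzero g_comp g_nonneg g_one
  set T : ℝ := ∫ x, g x ∂α with hT
  set D : G → ℝ := fun x => ∫ γ, g (γ * x) ∂α with hD
  have hDval : ∀ x, D x = (δ x)⁻¹ * T := fun x => hδR g g_cont g_comp x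
  have hDpos : ∀ x, 0 < D x := by
    intro x; rw [hDval x]
    exact mul_pos (inv_pos.2 (hpos x)) int_g_pos
  -- continuity of D
  have D_cont : Continuous D := by
    have h1 : Continuous (fun x : G => ∫ y, g (y⁻¹ * x) ∂α.inv) :=
      continuous_integral_apply_inv_mul g_cont g_comp
    have h2 : (fun x : G => ∫ y, g (y⁻¹ * x) ∂α.inv) = D := by
      funext x
      rw [Measure.inv_def]
      have := integral_map_inv' α (fun y => g (y⁻¹ * x))
      simpa using this
    rwa [h2] at h1
  have δ_eq : δ = fun x => T * (D x)⁻¹ := by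
    funext x
    rw [hDval x]
    field_simp [(hpos x).ne']
  have δ_cont : Continuous δ := by
    rw [δ_eq]
    exact continuous_const.mul (D_cont.inv₀ fun x => (hDpos x).ne')
  -- multiplicativity
  have δ_mul : ∀ c d : G, δ (c * d) = δ c * δ d := by
    intro c d
    have h1 : ∫ γ, g (γ * (c * d)) ∂α = (δ (c * d))⁻¹ * T := hδR g g_cont g_comp (c * d)
    have h2 : ∫ γ, g (γ * c * d) ∂α = ((δ c)⁻¹ * (δ d)⁻¹) * T := by
      have h2a := hδR (fun γ => g (γ * d)) (g_cont.comp (continuous_id.mul continuous_const))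
        (g_comp.comp_homeomorph (Homeomorph.mulRight d)) c
      rw [hδR g g_cont g_comp d] at h2a
      rw [h2a]; ring
    simp only [← mul_assoc] at h1
    rw [h1] at h2
    have hcancel := mul_right_cancel₀ int_g_pos.ne' h2
    have h3 : (δ (c * d))⁻¹ = (δ c * δ d)⁻¹ := by rw [hcancel, mul_inv]
    exact inv_injective h3
  have δ_one : δ 1 = 1 := by
    have := δ_mul 1 1
    simp only [mul_one] at this
    nlinarith [hpos 1]
  have δ_inv : ∀ c : G, δ c⁻¹ = (δ c)⁻¹ := by
    intro c
    have h := δ_mul c⁻¹ c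
    rw [inv_mul_cancel, δ_one] at h
    exact eq_inv_of_mul_eq_one_left h.symm
  refine ⟨δ_cont, δ_inv, ?_⟩
  -- inversion formula, real version first
  have invR : ∀ f : G → ℝ, Continuous f → HasCompactSupport f →
      ∫ γ, f γ⁻¹ ∂α = ∫ γ, f γ * (δ γ)⁻¹ ∂α := by
    have main : ∀ f : G → ℝ, Continuous f → HasCompactSupport f →
        ∫ γ, f γ ∂α = ∫ γ, f γ⁻¹ * (δ γ)⁻¹ ∂α := by
      intro f hf h'f
      have A := Measure.integral_isMulLeftInvariant_isMulRightInvariant_combo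
        (μ := α) (ν := α.inv) hf h'f g_cont g_comp g_nonneg g_one
      have hDν : ∀ y : G, ∫ z, g (z⁻¹ * y) ∂α.inv = D y := by
        intro y
        rw [Measure.inv_def]
        have := integral_map_inv' α (fun z => g (z⁻¹ * y))
        simpa using this
      simp only [hDν] at A
      rw [A]
      have : ∀ y : G, f y * (D y)⁻¹ = (f y * δ y) * T⁻¹ := by
        intro y; rw [hDval y]
        field_simp
      simp only [this, integral_mul_const]
      rw [mul_assoc, inv_mul_cancel₀ int_g_pos.ne', mul_one]
      rw [Measure.inv_def, integral_map_inv']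
      congr 1
      funext y
      rw [δ_inv y]
    intro f hf h'f
    have := main (fun y => f y⁻¹) (hf.comp continuous_inv)
      (h'f.comp_homeomorph (Homeomorph.inv G))
    simpa using this
  -- complex version
  intro h h_cont h_comp
  have hre : Continuous fun γ => (h γ).re := Complex.continuous_re.comp h_cont
  have him : Continuous fun γ => (h γ).im := Complex.continuous_im.comp h_cont
  have hre_c : HasCompactSupport fun γ => (h γ).re := h_comp.comp_left rfl
  have him_c : HasCompactSupport fun γ => (h γ).im := h_comp.comp_left rfl
  have int1 : Integrable (fun γ => h γ⁻¹) α :=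
    (h_cont.comp continuous_inv).integrable_of_hasCompactSupport
      (h_comp.comp_homeomorph (Homeomorph.inv G))
  have hδc : Continuous fun γ => ((δ γ : ℝ) : ℂ)⁻¹ :=
    (Complex.continuous_ofReal.comp δ_cont).inv₀ fun γ =>
      Complex.ofReal_ne_zero.2 (hpos γ).ne'
  have int2 : Integrable (fun γ => h γ * ((δ γ : ℝ) : ℂ)⁻¹) α :=
    (h_cont.mul hδc).integrable_of_hasCompactSupport (h_comp.mul_right)
  rw [← integral_re_add_im int1, ← integral_re_add_im int2]
  have e1 : ∀ γ : G, RCLike.re (h γ * ((δ γ : ℝ) : ℂ)⁻¹) = (h γ).re * (δ γ)⁻¹ := by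
    intro γ
    simp [← Complex.ofReal_inv, Complex.mul_re]
  have e2 : ∀ γ : G, RCLike.im (h γ * ((δ γ : ℝ) : ℂ)⁻¹) = (h γ).im * (δ γ)⁻¹ := by
    intro γ
    simp [← Complex.ofReal_inv, Complex.mul_im]
  simp only [e1, e2, RCLike.re_to_complex, RCLike.im_to_complex]
  rw [invR _ hre hre_c, invR _ him him_c]

/-- a continuous homomorphism `φ : H → G` of locally compact Hausdorff
groups makes the right Haar measure `α⁻¹ = inv_* α` on `G` quasi-invariant for the
action `η·γ = φ(η)γ`, with adjoining function `Δ(η, ·) = δ_G(φ(η))/δ_H(η)`: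
`∫∫ f(η⁻¹, γ) dβ dα⁻¹ = ∫∫ f(η, φ(η)⁻¹γ) δ_G(φ(η))/δ_H(η) dβ dα⁻¹`. -/
theorem group_hom_gives_quasi_invariance
    {G H : Type*}
    [Group G] [TopologicalSpace G] [IsTopologicalGroup G]
    [LocallyCompactSpace G] [T2Space G] [MeasurableSpace G] [BorelSpace G]
    [Group H] [TopologicalSpace H] [IsTopologicalGroup H]
    [LocallyCompactSpace H] [T2Space H] [MeasurableSpace H] [BorelSpace H]
    (α : Measure G) [α.IsHaarMeasure]
    (β : Measure H) [β.IsHaarMeasure]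
    (δG : G → ℝ) (hδGpos : ∀ γ, 0 < δG γ)
    (hδG : ∀ f : G → ℂ, Continuous f → HasCompactSupport f → ∀ c : G,
      ∫ γ, f (γ * c) ∂α = ((δG c : ℂ))⁻¹ * ∫ γ, f γ ∂α)
    (δH : H → ℝ) (hδHpos : ∀ η, 0 < δH η)
    (hδH : ∀ f : H → ℂ, Continuous f → HasCompactSupport f → ∀ c : H,
      ∫ η, f (η * c) ∂β = ((δH c : ℂ))⁻¹ * ∫ η, f η ∂β)
    (φ : H →* G) (hφ : Continuous φ) :
    ∀ f : H × G → ℂ, Continuous f → HasCompactSupport f →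
      ∫ γ, (∫ η, f (η⁻¹, γ) ∂β) ∂(Measure.map (fun γ : G => γ⁻¹) α)
        = ∫ γ, (∫ η, f (η, (φ η)⁻¹ * γ) * ((δG (φ η) / δH η : ℝ) : ℂ) ∂β)
            ∂(Measure.map (fun γ : G => γ⁻¹) α) := by
  obtain ⟨δG_cont, δG_inv, -⟩ := delta_props α δG hδGpos hδG
  obtain ⟨δH_cont, -, βinv⟩ := delta_props β δH hδHpos hδH
  intro f f_cont f_comp
  set K₁ : Set H := Prod.fst '' tsupport f with hK₁
  set K₂ : Set G := Prod.snd '' tsupport f with hK₂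
  have K₁c : IsCompact K₁ := f_comp.image continuous_fst
  have K₂c : IsCompact K₂ := f_comp.image continuous_snd
  have mem_supp : ∀ p : H × G, f p ≠ 0 → p.1 ∈ K₁ ∧ p.2 ∈ K₂ := by
    intro p hp
    have hmem : p ∈ tsupport f := subset_tsupport f hp
    exact ⟨⟨p, hmem, rfl⟩, ⟨p, hmem, rfl⟩⟩
  rw [integral_map_inv', integral_map_inv']
  have L1 : ∀ c : G, ∫ η, f (η⁻¹, c) ∂β = ∫ η, f (η, c) * ((δH η : ℝ) : ℂ)⁻¹ ∂β := by
    intro c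
    refine βinv (fun η => f (η, c))
      (f_cont.comp (continuous_id.prodMk continuous_const))
      (HasCompactSupport.intro K₁c fun η hη => ?_)
    by_contra hne
    exact hη (mem_supp (η, c) hne).1
  simp_rw [L1]
  -- continuity helpers
  have cδH : Continuous fun η : H => ((δH η : ℝ) : ℂ)⁻¹ :=
    (Complex.continuous_ofReal.comp δH_cont).inv₀ fun η =>
      Complex.ofReal_ne_zero.2 (hδHpos η).ne'
  have cΔ : Continuous fun η : H => ((δG (φ η) / δH η : ℝ) : ℂ) :=
    Complex.continuous_ofReal.comp ((δG_cont.comp hφ).div δH_cont fun η => (hδHpos η).ne')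
  -- left swap data
  have cL : Continuous (Function.uncurry fun (γ : G) (η : H) =>
      f (η, γ⁻¹) * ((δH η : ℝ) : ℂ)⁻¹) :=
    (f_cont.comp (continuous_snd.prodMk continuous_fst.inv)).mul (cδH.comp continuous_snd)
  have sL : HasCompactSupport (Function.uncurry fun (γ : G) (η : H) =>
      f (η, γ⁻¹) * ((δH η : ℝ) : ℂ)⁻¹) := by
    apply HasCompactSupport.intro (K₂c.inv.prod K₁c)
    rintro ⟨γ, η⟩ hp
    have : f (η, γ⁻¹) = 0 := by
      by_contra hne
      exact hp ⟨Set.mem_inv.2 (mem_supp (η, γ⁻¹) hne).2, (mem_supp (η, γ⁻¹) hne).1⟩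
    simp only [Function.uncurry]
    rw [this, zero_mul]
  -- right swap data
  have cR : Continuous (Function.uncurry fun (γ : G) (η : H) =>
      f (η, (φ η)⁻¹ * γ⁻¹) * ((δG (φ η) / δH η : ℝ) : ℂ)) :=
    (f_cont.comp (continuous_snd.prodMk
      (((hφ.comp continuous_snd).inv).mul continuous_fst.inv))).mul (cΔ.comp continuous_snd)
  have sR : HasCompactSupport (Function.uncurry fun (γ : G) (η : H) =>
      f (η, (φ η)⁻¹ * γ⁻¹) * ((δG (φ η) / δH η : ℝ) : ℂ)) := by
    apply HasCompactSupport.intro ((((K₁c.image hφ).mul K₂c).inv).prod K₁c)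
    rintro ⟨γ, η⟩ hp
    have : f (η, (φ η)⁻¹ * γ⁻¹) = 0 := by
      by_contra hne
      obtain ⟨h1, h2⟩ := mem_supp (η, (φ η)⁻¹ * γ⁻¹) hne
      refine hp ⟨Set.mem_inv.2 ?_, h1⟩
      have : γ⁻¹ = φ η * ((φ η)⁻¹ * γ⁻¹) := by group
      rw [this]
      exact Set.mul_mem_mul ⟨η, h1, rfl⟩ h2
    simp only [Function.uncurry]
    rw [this, zero_mul]
  calc ∫ γ, ∫ η, f (η, γ⁻¹) * ((δH η : ℝ) : ℂ)⁻¹ ∂β ∂α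
      = ∫ η, ∫ γ, f (η, γ⁻¹) * ((δH η : ℝ) : ℂ)⁻¹ ∂α ∂β :=
        integral_integral_swap_of_hasCompactSupport cL sL
    _ = ∫ η, ∫ γ, f (η, (φ η)⁻¹ * γ⁻¹) * ((δG (φ η) / δH η : ℝ) : ℂ) ∂α ∂β := by
        refine integral_congr_ae (Filter.Eventually.of_forall fun η => ?_)
        show ∫ γ, f (η, γ⁻¹) * ((δH η : ℝ) : ℂ)⁻¹ ∂α
            = ∫ γ, f (η, (φ η)⁻¹ * γ⁻¹) * ((δG (φ η) / δH η : ℝ) : ℂ) ∂α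
        rw [integral_mul_const, integral_mul_const]
        have kcont : Continuous fun γ : G => f (η, (φ η)⁻¹ * γ⁻¹) :=
          f_cont.comp (continuous_const.prodMk (continuous_const.mul continuous_inv))
        have kcomp : HasCompactSupport fun γ : G => f (η, (φ η)⁻¹ * γ⁻¹) := by
          apply HasCompactSupport.intro (K := (fun s : G => s⁻¹ * (φ η)⁻¹) '' K₂)
            (K₂c.image (continuous_inv.mul continuous_const))
          intro γ hγ
          by_contra hne
          exact hγ ⟨(φ η)⁻¹ * γ⁻¹, (mem_supp (η, (φ η)⁻¹ * γ⁻¹) hne).2, by group⟩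
        have key := hδG (fun γ => f (η, (φ η)⁻¹ * γ⁻¹)) kcont kcomp ((φ η)⁻¹)
        simp only [mul_inv_rev, inv_inv, inv_mul_cancel_left] at key
        rw [δG_inv (φ η)] at key
        rw [key]
        have h1 : ((δG (φ η) : ℝ) : ℂ) ≠ 0 := Complex.ofReal_ne_zero.2 (hδGpos _).ne'
        have h2 : ((δH η : ℝ) : ℂ) ≠ 0 := Complex.ofReal_ne_zero.2 (hδHpos _).ne'
        push_cast
        field_simp
    _ = ∫ γ, ∫ η, f (η, (φ η)⁻¹ * γ⁻¹) * ((δG (φ η) / δH η : ℝ) : ℂ) ∂β ∂α :=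
        (integral_integral_swap_of_hasCompactSupport cR sR).symm
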